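/- Let T be a finite tree with a degree-2 internal vertex ∂ adjacent to a leaf x and another vertex z, with edge weights α(x,∂), α(∂,z) ∈ (0,d) satisfying α(x,∂)+α(∂,z) > d. Let T' be T with ∂ removed and the two edges merged into {x,z} with weight α(x,∂)+α(∂,z)−d. Then for any labelling φ : V(T)\{∂} → ℤ^d, ∑_{y∈ℤ^d} p_{φ[∂↦y]}(T) ≤ C p_φ(T'), where p is the edge-weight product p_ψ(S) = ∏_{(u,v)∈E(S)} 1/(1+‖ψ(u)−ψ(v)‖^{α(u,v)}) and C depends only on d and the weights. -/

import Mathlib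

/-- Euclidean norm of a point of `ℤ^d`. -/
noncomputable def znorm {d : ℕ} (x : Fin d → ℤ) : ℝ :=
  Real.sqrt (∑ i, ((x i : ℝ)) ^ 2)

/-- Weight of a (oriented) edge set `E` with edge exponents `α` and vertex
labelling `ψ` into `ℤ^d`. -/
noncomputable def edgesWeight {V : Type*} {d : ℕ} (E : Finset (V × V))
    (α : V × V → ℝ) (ψ : V → (Fin d → ℤ)) : ℝ :=
  ∏ e ∈ E, 1 / (1 + znorm (ψ e.1 - ψ e.2) ^ α e)

namespace ZN
variable {d : ℕ}

noncomputable def toE (x : Fin d → ℤ) : EuclideanSpace ℝ (Fin d) := WithLp.toLp 2 (fun i => (x i : ℝ))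

lemma znorm_eq (x : Fin d → ℤ) : znorm x = ‖toE x‖ := by
  rw [EuclideanSpace.norm_eq, znorm]
  congr 1
  refine Finset.sum_congr rfl fun i _ => ?_
  rw [Real.norm_eq_abs, sq_abs]; rfl

lemma znorm_nonneg (x : Fin d → ℤ) : 0 ≤ znorm x := Real.sqrt_nonneg _

lemma toE_sub (x y : Fin d → ℤ) : toE (x - y) = toE x - toE y := by
  ext i; simp [toE, sub_eq_add_neg]

lemma znorm_zero : znorm (0 : Fin d → ℤ) = 0 := by
  simp [znorm]

lemma znorm_sub_rev (x y : Fin d → ℤ) : znorm (x - y) = znorm (y - x) := by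
  rw [znorm_eq, znorm_eq, toE_sub, toE_sub, ← norm_neg, neg_sub]

lemma znorm_triangle (x y z : Fin d → ℤ) : znorm (x - z) ≤ znorm (x - y) + znorm (y - z) := by
  rw [znorm_eq, znorm_eq, znorm_eq, toE_sub, toE_sub, toE_sub]
  exact norm_sub_le_norm_sub_add_norm_sub _ _ _

lemma abs_coord_le (x : Fin d → ℤ) (i : Fin d) : |(x i : ℝ)| ≤ znorm x := by
  rw [znorm, ← Real.sqrt_sq_eq_abs]
  apply Real.sqrt_le_sqrt
  exact Finset.single_le_sum (f := fun i => ((x i : ℝ))^2) (fun j _ => sq_nonneg _) (Finset.mem_univ i)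

lemma one_le_znorm {x : Fin d → ℤ} (hx : x ≠ 0) : 1 ≤ znorm x := by
  obtain ⟨i, hi⟩ : ∃ i, x i ≠ 0 := by
    by_contra h
    push_neg at h
    exact hx (funext h)
  calc (1:ℝ) ≤ |(x i : ℝ)| := by
        rw [← Int.cast_abs]
        exact_mod_cast Int.one_le_abs (by simpa using hi)
    _ ≤ znorm x := abs_coord_le x i


lemma two_pow_rpow (j : ℕ) (e : ℝ) : ((2:ℝ)^j) ^ e = ((2:ℝ)^e)^j := by
  rw [← Real.rpow_natCast 2 j, ← Real.rpow_mul (by norm_num), mul_comm,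
    Real.rpow_mul (by norm_num), Real.rpow_natCast]

lemma rpow_anti {x y e : ℝ} (hx : 0 < x) (hxy : x ≤ y) (he : 0 ≤ e) :
    y ^ (-e) ≤ x ^ (-e) := by
  rw [Real.rpow_neg hx.le, Real.rpow_neg (hx.le.trans hxy)]
  exact inv_anti₀ (Real.rpow_pos_of_pos hx e) (Real.rpow_le_rpow hx.le hxy he)

lemma geom_tail {r : ℝ} (h0 : 0 ≤ r) (h1 : r < 1) (J0 : ℕ) (T : Finset ℕ)
    (hT : ∀ j ∈ T, J0 ≤ j) : ∑ j ∈ T, r ^ j ≤ r ^ J0 / (1 - r) := by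
  have hpos : 0 < 1 - r := by linarith
  have hsub : T ⊆ Finset.Ico J0 (J0 + (T.sup id + 1)) := by
    intro j hj
    simp only [Finset.mem_Ico]
    exact ⟨hT j hj, lt_of_le_of_lt (Finset.le_sup (f := id) hj) (by omega)⟩
  calc ∑ j ∈ T, r ^ j ≤ ∑ j ∈ Finset.Ico J0 (J0 + (T.sup id + 1)), r ^ j :=
        Finset.sum_le_sum_of_subset_of_nonneg hsub (fun j _ _ => pow_nonneg h0 j)
    _ = ∑ i ∈ Finset.range (T.sup id + 1), r ^ (J0 + i) := by
        rw [Finset.sum_Ico_eq_sum_range]; simp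
    _ = r ^ J0 * ∑ i ∈ Finset.range (T.sup id + 1), r ^ i := by
        rw [Finset.mul_sum]
        exact Finset.sum_congr rfl fun i _ => pow_add r J0 i
    _ ≤ r ^ J0 * (1 / (1 - r)) := by
        apply mul_le_mul_of_nonneg_left _ (pow_nonneg h0 _)
        rw [geom_sum_eq (ne_of_lt h1)]
        have heq : (r ^ (T.sup id + 1) - 1) / (r - 1) = (1 - r ^ (T.sup id + 1)) / (1 - r) := by
          rw [div_eq_div_iff (by linarith) hpos.ne']; ring
        rw [heq, div_le_div_iff₀ hpos hpos]
        nlinarith [pow_nonneg h0 (T.sup id + 1)]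
    _ = r ^ J0 / (1 - r) := by ring

lemma geom_inc {q : ℝ} (h1 : 1 < q) (J1 : ℕ) (T : Finset ℕ)
    (hT : ∀ j ∈ T, j ≤ J1) : ∑ j ∈ T, q ^ j ≤ q ^ J1 * (q / (q - 1)) := by
  have hsub : T ⊆ Finset.range (J1 + 1) := fun j hj => Finset.mem_range.mpr (by
    have := hT j hj; omega)
  have h0 : (0:ℝ) ≤ q := by linarith
  have hq1 : 0 < q - 1 := by linarith
  calc ∑ j ∈ T, q ^ j ≤ ∑ j ∈ Finset.range (J1 + 1), q ^ j :=
        Finset.sum_le_sum_of_subset_of_nonneg hsub (fun j _ _ => pow_nonneg h0 j)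
    _ = (q ^ (J1 + 1) - 1) / (q - 1) := geom_sum_eq (by linarith) _
    _ ≤ q ^ (J1 + 1) / (q - 1) := by
        rw [div_le_div_iff₀ hq1 hq1]; nlinarith
    _ = q ^ J1 * (q / (q - 1)) := by rw [pow_succ]; ring

/-- Counting: a finite set of lattice points of norm `< 2^(j+1)` has at most
`8^d * (2^d)^j` elements. -/
lemma card_shell_le (j : ℕ) (s : Finset (Fin d → ℤ))
    (hs : ∀ u ∈ s, znorm u < 2 ^ (j + 1)) :
    (s.card : ℝ) ≤ 8 ^ d * ((2:ℝ) ^ d) ^ j := by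
  classical
  have hsub : s ⊆ Fintype.piFinset (fun _ : Fin d => Finset.Icc (-(2^(j+1) : ℤ)) (2^(j+1))) := by
    intro u hu
    rw [Fintype.mem_piFinset]
    intro i
    rw [Finset.mem_Icc, ← abs_le]
    have h1 : |(u i : ℝ)| ≤ znorm u := abs_coord_le u i
    have h2 : znorm u < 2 ^ (j + 1) := hs u hu
    have : |(u i : ℝ)| < ((2^(j+1) : ℤ) : ℝ) := by push_cast; linarith
    rw [← Int.cast_abs] at this
    exact_mod_cast this.le
  have hIcc : (((Finset.Icc (-(2^(j+1) : ℤ)) (2^(j+1))).card : ℕ) : ℝ) ≤ 8 * 2 ^ j := by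
    rw [Int.card_Icc]
    have h1 : ((2:ℤ)^(j+1) + 1 - -(2^(j+1))) = 2 * 2^(j+1) + 1 := by ring
    rw [h1]
    have hnn : (0:ℤ) ≤ 2 * 2^(j+1) + 1 := by positivity
    have h2 : (((2 * 2^(j+1) + 1 : ℤ).toNat : ℕ) : ℝ) = ((2 * 2^(j+1) + 1 : ℤ) : ℝ) := by
      exact_mod_cast congrArg (Int.cast : ℤ → ℝ) (Int.toNat_of_nonneg hnn)
    rw [h2]
    push_cast
    rw [pow_succ]
    have h3 : (1:ℝ) ≤ 2 ^ j := one_le_pow₀ (by norm_num)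
    nlinarith
  have hcard : (s.card : ℝ) ≤ (((Fintype.piFinset (fun _ : Fin d => Finset.Icc (-(2^(j+1) : ℤ)) (2^(j+1)))).card : ℕ) : ℝ) := by
    exact_mod_cast Finset.card_le_card hsub
  rw [Fintype.card_piFinset] at hcard
  push_cast at hcard
  rw [Finset.prod_const, Finset.card_univ, Fintype.card_fin] at hcard
  calc (s.card : ℝ) ≤ (((Finset.Icc (-(2^(j+1) : ℤ)) (2^(j+1))).card : ℕ) : ℝ) ^ d := hcard
    _ ≤ (8 * 2 ^ j) ^ d := pow_le_pow_left₀ (by positivity) hIcc d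
    _ = 8 ^ d * ((2:ℝ) ^ d) ^ j := by rw [mul_pow, ← pow_mul, ← pow_mul, Nat.mul_comm]



noncomputable def shellIdx {d : ℕ} (u : Fin d → ℤ) : ℕ := Nat.log 2 ⌊znorm u⌋₊

lemma shell_le {u : Fin d → ℤ} (hu : u ≠ 0) : (2:ℝ) ^ shellIdx u ≤ znorm u := by
  have h1 : 1 ≤ znorm u := one_le_znorm hu
  have hm : ⌊znorm u⌋₊ ≠ 0 := by
    have : 1 ≤ ⌊znorm u⌋₊ := Nat.le_floor (by exact_mod_cast h1)
    omega
  have h2 : (2:ℕ) ^ shellIdx u ≤ ⌊znorm u⌋₊ := Nat.pow_log_le_self 2 hm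
  calc (2:ℝ) ^ shellIdx u = ((2 ^ shellIdx u : ℕ) : ℝ) := by push_cast; ring
    _ ≤ (⌊znorm u⌋₊ : ℝ) := by exact_mod_cast h2
    _ ≤ znorm u := Nat.floor_le (znorm_nonneg u)

lemma shell_lt (u : Fin d → ℤ) : znorm u < (2:ℝ) ^ (shellIdx u + 1) := by
  have h1 : znorm u < ⌊znorm u⌋₊ + 1 := Nat.lt_floor_add_one _
  have h2 : ⌊znorm u⌋₊ < 2 ^ (shellIdx u + 1) := Nat.lt_pow_succ_log_self (by norm_num) _
  have h3 : (⌊znorm u⌋₊ : ℝ) + 1 ≤ ((2 ^ (shellIdx u + 1) : ℕ) : ℝ) := by exact_mod_cast h2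
  calc znorm u < (⌊znorm u⌋₊ : ℝ) + 1 := h1
    _ ≤ ((2 ^ (shellIdx u + 1) : ℕ) : ℝ) := h3
    _ = (2:ℝ) ^ (shellIdx u + 1) := by push_cast; ring

lemma term_nonneg (e : ℝ) (u : Fin d → ℤ) : 0 ≤ (1 + znorm u) ^ (-e) :=
  Real.rpow_nonneg (by have := znorm_nonneg u; linarith) _

lemma fiber_sum_le {e : ℝ} (he : 0 ≤ e) (j : ℕ) (t : Finset (Fin d → ℤ))
    (ht : ∀ u ∈ t, u ≠ 0 ∧ shellIdx u = j) :
    ∑ u ∈ t, (1 + znorm u) ^ (-e) ≤ 8 ^ d * ((2:ℝ) ^ ((d:ℝ) - e)) ^ j := by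
  have hterm : ∀ u ∈ t, (1 + znorm u) ^ (-e) ≤ ((2:ℝ) ^ j) ^ (-e) := by
    intro u hu
    obtain ⟨hu0, huj⟩ := ht u hu
    have h1 : (2:ℝ) ^ j ≤ 1 + znorm u := by
      have := shell_le hu0; rw [huj] at this
      have := znorm_nonneg u; linarith
    exact rpow_anti (by positivity) h1 he
  have hcard : (t.card : ℝ) ≤ 8 ^ d * ((2:ℝ) ^ d) ^ j := by
    apply card_shell_le
    intro u hu
    obtain ⟨hu0, huj⟩ := ht u hu
    have := shell_lt u; rw [huj] at this; exact this
  calc ∑ u ∈ t, (1 + znorm u) ^ (-e) ≤ ∑ _u ∈ t, ((2:ℝ) ^ j) ^ (-e) :=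
        Finset.sum_le_sum hterm
    _ = (t.card : ℝ) * ((2:ℝ) ^ j) ^ (-e) := by rw [Finset.sum_const, nsmul_eq_mul]
    _ ≤ 8 ^ d * ((2:ℝ) ^ d) ^ j * ((2:ℝ) ^ j) ^ (-e) := by
        apply mul_le_mul_of_nonneg_right hcard (Real.rpow_nonneg (by positivity) _)
    _ = 8 ^ d * ((2:ℝ) ^ ((d:ℝ) - e)) ^ j := by
        rw [mul_assoc]
        congr 1
        rw [← pow_mul, Nat.mul_comm, pow_mul, ← Real.rpow_natCast ((2:ℝ)^j) d,
          ← Real.rpow_add (by positivity), ← two_pow_rpow, sub_eq_add_neg]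

lemma ball_sum (hd : 0 < d) {A : ℝ} (hA : 0 < A) (hA' : A < d) :
    ∃ C : ℝ, 0 < C ∧ ∀ M : ℝ, 0 ≤ M → ∀ s : Finset (Fin d → ℤ),
      (∀ u ∈ s, znorm u ≤ M) →
      ∑ u ∈ s, (1 + znorm u) ^ (-A) ≤ C * (1 + M) ^ ((d:ℝ) - A) := by
  classical
  set q : ℝ := (2:ℝ) ^ ((d:ℝ) - A) with hqdef
  have hq : 1 < q := by
    rw [hqdef]
    apply Real.one_lt_rpow_iff (by norm_num) |>.mpr
    exact Or.inl ⟨by norm_num, by linarith⟩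
  have hq0 : 0 < q - 1 := by linarith
  refine ⟨1 + 8 ^ d * (q / (q - 1)), by positivity, ?_⟩
  intro M hM s hs
  have hMe : (1:ℝ) ≤ (1 + M) ^ ((d:ℝ) - A) :=
    Real.one_le_rpow (by linarith) (by linarith)
  rw [← Finset.sum_filter_add_sum_filter_not s (fun u => u = 0)]
  have hzero : ∑ u ∈ s.filter (fun u => u = 0), (1 + znorm u) ^ (-A) ≤ 1 := by
    calc ∑ u ∈ s.filter (fun u => u = 0), (1 + znorm u) ^ (-A)
        ≤ ∑ u ∈ ({0} : Finset (Fin d → ℤ)), (1 + znorm u) ^ (-A) := by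
          apply Finset.sum_le_sum_of_subset_of_nonneg
          · intro u hu
            simp only [Finset.mem_filter] at hu
            simp [hu.2]
          · intro u _ _; exact term_nonneg A u
      _ = 1 := by simp [znorm_zero]
  have hrest : ∑ u ∈ s.filter (fun u => ¬ u = 0), (1 + znorm u) ^ (-A)
      ≤ 8 ^ d * (q / (q - 1)) * (1 + M) ^ ((d:ℝ) - A) := by
    set s' := s.filter (fun u => ¬ u = 0) with hs'def
    by_cases hM1 : 1 ≤ M
    · set J1 : ℕ := Nat.log 2 ⌊M⌋₊ with hJ1
      have himg : ∀ j ∈ s'.image shellIdx, j ≤ J1 := by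
        intro j hj
        obtain ⟨u, hu, huj⟩ := Finset.mem_image.mp hj
        have hu' : u ∈ s ∧ u ≠ 0 := by simpa [hs'def] using Finset.mem_filter.mp hu
        have h2j : (2:ℝ) ^ j ≤ M := by
          have := shell_le hu'.2; rw [huj] at this
          exact this.trans (hs u hu'.1)
        have h2j' : (2:ℕ) ^ j ≤ ⌊M⌋₊ := Nat.le_floor (by exact_mod_cast h2j)
        calc j = Nat.log 2 (2 ^ j) := (Nat.log_pow (by norm_num) j).symm
          _ ≤ J1 := Nat.log_mono_right h2j'
      have hfib := Finset.sum_fiberwise_of_maps_to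
        (g := shellIdx) (t := s'.image shellIdx)
        (fun u hu => Finset.mem_image_of_mem _ hu) (fun u => (1 + znorm u) ^ (-A))
      rw [← hfib]
      have hstep : ∀ j ∈ s'.image shellIdx,
          ∑ u ∈ s'.filter (fun u => shellIdx u = j), (1 + znorm u) ^ (-A) ≤ 8 ^ d * q ^ j := by
        intro j _
        apply fiber_sum_le hA.le
        intro u hu
        have := Finset.mem_filter.mp hu
        have := Finset.mem_filter.mp this.1
        exact ⟨by simpa using this.2, (Finset.mem_filter.mp hu).2⟩
      calc ∑ j ∈ s'.image shellIdx, ∑ u ∈ s'.filter (fun u => shellIdx u = j), (1 + znorm u) ^ (-A)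
          ≤ ∑ j ∈ s'.image shellIdx, 8 ^ d * q ^ j := Finset.sum_le_sum hstep
        _ = 8 ^ d * ∑ j ∈ s'.image shellIdx, q ^ j := by rw [Finset.mul_sum]
        _ ≤ 8 ^ d * (q ^ J1 * (q / (q - 1))) := by
            apply mul_le_mul_of_nonneg_left (geom_inc hq J1 _ himg) (by positivity)
        _ ≤ 8 ^ d * (q / (q - 1)) * (1 + M) ^ ((d:ℝ) - A) := by
            have hqJ : q ^ J1 ≤ (1 + M) ^ ((d:ℝ) - A) := by
              rw [hqdef, ← two_pow_rpow]
              apply Real.rpow_le_rpow (by positivity) _ (by linarith)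
              have hm : ⌊M⌋₊ ≠ 0 := by
                have : 1 ≤ ⌊M⌋₊ := Nat.le_floor (by exact_mod_cast hM1)
                omega
              have := Nat.pow_log_le_self 2 hm
              calc (2:ℝ) ^ J1 = ((2 ^ J1 : ℕ) : ℝ) := by push_cast; ring
                _ ≤ (⌊M⌋₊ : ℝ) := by exact_mod_cast this
                _ ≤ M := Nat.floor_le hM
                _ ≤ 1 + M := by linarith
            calc 8 ^ d * (q ^ J1 * (q / (q - 1)))
                = 8 ^ d * (q / (q - 1)) * q ^ J1 := by ring
              _ ≤ 8 ^ d * (q / (q - 1)) * (1 + M) ^ ((d:ℝ) - A) := by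
                  apply mul_le_mul_of_nonneg_left hqJ (by positivity)
    · have : s' = ∅ := by
        rw [Finset.eq_empty_iff_forall_notMem]
        intro u hu
        have hu' : u ∈ s ∧ u ≠ 0 := by simpa [hs'def] using Finset.mem_filter.mp hu
        have := one_le_znorm hu'.2
        have := hs u hu'.1
        push_neg at hM1
        linarith
      rw [this, Finset.sum_empty]
      positivity
  calc ∑ u ∈ s.filter (fun u => u = 0), (1 + znorm u) ^ (-A)
        + ∑ u ∈ s.filter (fun u => ¬ u = 0), (1 + znorm u) ^ (-A)
      ≤ 1 + 8 ^ d * (q / (q - 1)) * (1 + M) ^ ((d:ℝ) - A) := add_le_add hzero hrest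
    _ ≤ (1 + 8 ^ d * (q / (q - 1))) * (1 + M) ^ ((d:ℝ) - A) := by
        have hK : (0:ℝ) ≤ 8 ^ d * (q / (q - 1)) := by positivity
        nlinarith

lemma tail_sum (hd : 0 < d) {p : ℝ} (hp : (d:ℝ) < p) :
    ∃ C : ℝ, 0 < C ∧ ∀ M : ℝ, 0 ≤ M → ∀ s : Finset (Fin d → ℤ),
      (∀ u ∈ s, M ≤ znorm u) →
      ∑ u ∈ s, (1 + znorm u) ^ (-p) ≤ C * (1 + M) ^ ((d:ℝ) - p) := by
  classical
  set r : ℝ := (2:ℝ) ^ ((d:ℝ) - p) with hrdef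
  have hr0 : 0 < r := Real.rpow_pos_of_pos (by norm_num) _
  have hr1 : r < 1 := by
    rw [hrdef]
    exact Real.rpow_lt_one_of_one_lt_of_neg (by norm_num) (by linarith)
  set K : ℝ := 8 ^ d * (1 / (1 - r)) with hKdef
  have hK0 : 0 < K := by
    rw [hKdef]
    have h1r : (0:ℝ) < 1 - r := by linarith
    positivity
  refine ⟨(1 + K) / r + K * (4:ℝ) ^ (p - (d:ℝ)),
    add_pos (div_pos (by linarith) hr0)
      (mul_pos hK0 (Real.rpow_pos_of_pos (by norm_num) _)), ?_⟩
  intro M hM s hs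
  have hMe0 : (0:ℝ) < (1 + M) ^ ((d:ℝ) - p) := Real.rpow_pos_of_pos (by linarith) _
  have h4 : (0:ℝ) < (4:ℝ) ^ (p - (d:ℝ)) := Real.rpow_pos_of_pos (by norm_num) _
  by_cases hM1 : 1 ≤ M
  · -- every element of s is nonzero
    have hs0 : ∀ u ∈ s, u ≠ 0 := by
      intro u hu h0
      have := hs u hu
      rw [h0, znorm_zero] at this
      linarith
    set J0 : ℕ := Nat.log 2 ⌊M⌋₊ with hJ0
    have himg : ∀ j ∈ s.image shellIdx, J0 ≤ j := by
      intro j hj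
      obtain ⟨u, hu, huj⟩ := Finset.mem_image.mp hj
      have h1 : M < (2:ℝ) ^ (j + 1) := by
        have := shell_lt u; rw [huj] at this
        exact lt_of_le_of_lt (hs u hu) this
      have hm : ⌊M⌋₊ ≠ 0 := by
        have : 1 ≤ ⌊M⌋₊ := Nat.le_floor (by exact_mod_cast hM1)
        omega
      have h2 : (2:ℝ) ^ J0 ≤ M := by
        have := Nat.pow_log_le_self 2 hm
        calc (2:ℝ) ^ J0 = ((2 ^ J0 : ℕ) : ℝ) := by push_cast; ring
          _ ≤ (⌊M⌋₊ : ℝ) := by exact_mod_cast this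
          _ ≤ M := Nat.floor_le hM
      have : (2:ℝ) ^ J0 < (2:ℝ) ^ (j + 1) := lt_of_le_of_lt h2 h1
      have := (pow_lt_pow_iff_right₀ (by norm_num : (1:ℝ) < 2)).mp this
      omega
    have hfib := Finset.sum_fiberwise_of_maps_to
      (g := shellIdx) (t := s.image shellIdx)
      (fun u hu => Finset.mem_image_of_mem _ hu) (fun u => (1 + znorm u) ^ (-p))
    rw [← hfib]
    have hstep : ∀ j ∈ s.image shellIdx,
        ∑ u ∈ s.filter (fun u => shellIdx u = j), (1 + znorm u) ^ (-p) ≤ 8 ^ d * r ^ j := by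
      intro j _
      apply fiber_sum_le (by linarith : (0:ℝ) ≤ p)
      intro u hu
      have h := Finset.mem_filter.mp hu
      exact ⟨hs0 u h.1, h.2⟩
    have hJ0le : (2:ℝ) ^ J0 ≥ (1 + M) / 4 := by
      have h2 : ⌊M⌋₊ < 2 ^ (J0 + 1) := Nat.lt_pow_succ_log_self (by norm_num) _
      have h3 : (⌊M⌋₊ : ℝ) + 1 ≤ ((2 ^ (J0 + 1) : ℕ) : ℝ) := by exact_mod_cast h2
      have h4' : M < (2:ℝ) ^ (J0 + 1) := by
        have := Nat.lt_floor_add_one M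
        have h5 : ((2 ^ (J0 + 1) : ℕ) : ℝ) = (2:ℝ) ^ (J0 + 1) := by push_cast; ring
        linarith [h5 ▸ h3]
      rw [pow_succ] at h4'
      linarith
    have hrJ0 : r ^ J0 ≤ (1 + M) ^ ((d:ℝ) - p) * (4:ℝ) ^ (p - (d:ℝ)) := by
      have e1 : r ^ J0 = ((2:ℝ) ^ J0) ^ ((d:ℝ) - p) := (two_pow_rpow J0 _).symm
      have e2 : ((2:ℝ) ^ J0) ^ ((d:ℝ) - p) ≤ ((1 + M) / 4) ^ ((d:ℝ) - p) := by
        have hq : (d:ℝ) - p = -(p - (d:ℝ)) := by ring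
        rw [hq]
        exact rpow_anti (by positivity) hJ0le (by linarith)
      have e3 : ((1 + M) / 4) ^ ((d:ℝ) - p) = (1 + M) ^ ((d:ℝ) - p) * (4:ℝ) ^ (p - (d:ℝ)) := by
        rw [Real.div_rpow (by linarith) (by norm_num)]
        rw [div_eq_mul_inv, ← Real.rpow_neg (by norm_num)]
        congr 1
        ring
      rw [e1, ← e3]; exact e2
    calc ∑ j ∈ s.image shellIdx, ∑ u ∈ s.filter (fun u => shellIdx u = j), (1 + znorm u) ^ (-p)
        ≤ ∑ j ∈ s.image shellIdx, 8 ^ d * r ^ j := Finset.sum_le_sum hstep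
      _ = 8 ^ d * ∑ j ∈ s.image shellIdx, r ^ j := by rw [Finset.mul_sum]
      _ ≤ 8 ^ d * (r ^ J0 / (1 - r)) :=
          mul_le_mul_of_nonneg_left (geom_tail hr0.le hr1 J0 _ himg) (by positivity)
      _ = K * r ^ J0 := by rw [hKdef]; ring
      _ ≤ K * ((1 + M) ^ ((d:ℝ) - p) * (4:ℝ) ^ (p - (d:ℝ))) :=
          mul_le_mul_of_nonneg_left hrJ0 hK0.le
      _ ≤ ((1 + K) / r + K * (4:ℝ) ^ (p - (d:ℝ))) * (1 + M) ^ ((d:ℝ) - p) := by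
          have h1 : (0:ℝ) ≤ (1 + K) / r * (1 + M) ^ ((d:ℝ) - p) := by positivity
          nlinarith
  · -- M < 1 : crude bound
    push_neg at hM1
    have hbound : ∑ u ∈ s, (1 + znorm u) ^ (-p) ≤ 1 + K := by
      rw [← Finset.sum_filter_add_sum_filter_not s (fun u => u = 0)]
      have hzero : ∑ u ∈ s.filter (fun u => u = 0), (1 + znorm u) ^ (-p) ≤ 1 := by
        calc ∑ u ∈ s.filter (fun u => u = 0), (1 + znorm u) ^ (-p)
            ≤ ∑ u ∈ ({0} : Finset (Fin d → ℤ)), (1 + znorm u) ^ (-p) := by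
              apply Finset.sum_le_sum_of_subset_of_nonneg
              · intro u hu
                simp only [Finset.mem_filter] at hu
                simp [hu.2]
              · intro u _ _; exact term_nonneg p u
          _ = 1 := by simp [znorm_zero]
      have hrest : ∑ u ∈ s.filter (fun u => ¬ u = 0), (1 + znorm u) ^ (-p) ≤ K := by
        set s' := s.filter (fun u => ¬ u = 0) with hs'def
        have hfib := Finset.sum_fiberwise_of_maps_to
          (g := shellIdx) (t := s'.image shellIdx)
          (fun u hu => Finset.mem_image_of_mem _ hu) (fun u => (1 + znorm u) ^ (-p))
        rw [← hfib]
        have hstep : ∀ j ∈ s'.image shellIdx,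
            ∑ u ∈ s'.filter (fun u => shellIdx u = j), (1 + znorm u) ^ (-p) ≤ 8 ^ d * r ^ j := by
          intro j _
          apply fiber_sum_le (by linarith : (0:ℝ) ≤ p)
          intro u hu
          have h := Finset.mem_filter.mp hu
          have h2 := Finset.mem_filter.mp h.1
          exact ⟨by simpa using h2.2, h.2⟩
        calc ∑ j ∈ s'.image shellIdx, ∑ u ∈ s'.filter (fun u => shellIdx u = j), (1 + znorm u) ^ (-p)
            ≤ ∑ j ∈ s'.image shellIdx, 8 ^ d * r ^ j := Finset.sum_le_sum hstep
          _ = 8 ^ d * ∑ j ∈ s'.image shellIdx, r ^ j := by rw [Finset.mul_sum]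
          _ ≤ 8 ^ d * (r ^ 0 / (1 - r)) :=
              mul_le_mul_of_nonneg_left (geom_tail hr0.le hr1 0 _ (fun j _ => Nat.zero_le j)) (by positivity)
          _ = K := by rw [hKdef]; ring
      linarith
    have hre : r ≤ (1 + M) ^ ((d:ℝ) - p) := by
      rw [hrdef]
      have : (d:ℝ) - p = -(p - (d:ℝ)) := by ring
      rw [this]
      exact rpow_anti (by linarith) (by linarith) (by linarith)
    calc ∑ u ∈ s, (1 + znorm u) ^ (-p) ≤ 1 + K := hbound
      _ = (1 + K) / r * r := by field_simp
      _ ≤ (1 + K) / r * (1 + M) ^ ((d:ℝ) - p) :=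
          mul_le_mul_of_nonneg_left hre (by positivity)
      _ ≤ ((1 + K) / r + K * (4:ℝ) ^ (p - (d:ℝ))) * (1 + M) ^ ((d:ℝ) - p) := by
          have h1 : (0:ℝ) ≤ K * (4:ℝ) ^ (p - (d:ℝ)) * (1 + M) ^ ((d:ℝ) - p) := by positivity
          nlinarith

lemma inv_le_scale {x y c : ℝ} (hx : 0 < x) (hy : 0 < y) (hc : 0 < c) (h : y ≤ c * x) :
    x⁻¹ ≤ c * y⁻¹ := by
  calc x⁻¹ ≤ (y / c)⁻¹ := inv_anti₀ (div_pos hy hc) ((div_le_iff₀ hc).mpr (by linarith))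
    _ = c / y := by rw [inv_div]
    _ = c * y⁻¹ := div_eq_mul_inv c y

lemma one_add_rpow_le {e t : ℝ} (he : 0 ≤ e) (ht : 0 ≤ t) :
    (1 + t) ^ e ≤ 2 ^ e * (1 + t ^ e) := by
  have h2 : (0:ℝ) < (2:ℝ) ^ e := Real.rpow_pos_of_pos (by norm_num) _
  rcases le_or_gt t 1 with h | h
  · calc (1 + t) ^ e ≤ (2:ℝ) ^ e := Real.rpow_le_rpow (by linarith) (by linarith) he
      _ ≤ 2 ^ e * (1 + t ^ e) := by
          apply le_mul_of_one_le_right h2.le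
          have := Real.rpow_nonneg ht e
          linarith
  · calc (1 + t) ^ e ≤ (2 * t) ^ e := Real.rpow_le_rpow (by linarith) (by linarith) he
      _ = 2 ^ e * t ^ e := Real.mul_rpow (by norm_num) ht
      _ ≤ 2 ^ e * (1 + t ^ e) := by
          apply mul_le_mul_of_nonneg_left _ h2.le
          linarith

lemma one_add_rpow_ge {e t : ℝ} (he : 0 ≤ e) (ht : 0 ≤ t) :
    1 + t ^ e ≤ 2 * (1 + t) ^ e := by
  have h1 : t ^ e ≤ (1 + t) ^ e := Real.rpow_le_rpow ht (by linarith) he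
  have h2 : (1:ℝ) ≤ (1 + t) ^ e := Real.one_le_rpow (by linarith) he
  linarith

lemma inv_one_add_rpow {e t : ℝ} (he : 0 ≤ e) (ht : 0 ≤ t) :
    (1 + t ^ e)⁻¹ ≤ 2 ^ e * (1 + t) ^ (-e) := by
  have h1 : (0:ℝ) < 1 + t ^ e := by have := Real.rpow_nonneg ht e; linarith
  have h2 : (0:ℝ) < (1 + t) ^ e := Real.rpow_pos_of_pos (by linarith) _
  rw [Real.rpow_neg (by linarith : (0:ℝ) ≤ 1 + t)]
  exact inv_le_scale h1 h2 (Real.rpow_pos_of_pos (by norm_num) _) (one_add_rpow_le he ht)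

lemma half_pow_bound {γ R : ℝ} (hγ : 0 ≤ γ) (hR : 0 ≤ R) :
    (1 + R / 2) ^ (-γ) ≤ 2 ^ γ * (1 + R) ^ (-γ) := by
  have h1 : (0:ℝ) < (1 + R / 2) ^ γ := Real.rpow_pos_of_pos (by linarith) _
  have h2 : (0:ℝ) < (1 + R) ^ γ := Real.rpow_pos_of_pos (by linarith) _
  rw [Real.rpow_neg (by linarith : (0:ℝ) ≤ 1 + R / 2),
    Real.rpow_neg (by linarith : (0:ℝ) ≤ 1 + R)]
  apply inv_le_scale h1 h2 (Real.rpow_pos_of_pos (by norm_num) _)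
  calc (1 + R) ^ γ ≤ (2 * (1 + R / 2)) ^ γ :=
        Real.rpow_le_rpow (by linarith) (by linarith) hγ
    _ = 2 ^ γ * (1 + R / 2) ^ γ := Real.mul_rpow (by norm_num) (by linarith)

lemma conv_sum (hd : 0 < d) {A B : ℝ} (hA : 0 < A) (hA' : A < d) (hB : 0 < B)
    (hB' : B < d) (hAB : (d:ℝ) < A + B) :
    ∃ C : ℝ, 0 < C ∧ ∀ (a b : Fin d → ℤ) (s : Finset (Fin d → ℤ)),
      ∑ y ∈ s, (1 + znorm (a - y) ^ A)⁻¹ * (1 + znorm (y - b) ^ B)⁻¹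
        ≤ C * (1 + znorm (a - b) ^ (A + B - (d:ℝ)))⁻¹ := by
  classical
  obtain ⟨C1, hC1, hball1⟩ := ball_sum hd hA hA'
  obtain ⟨C2, hC2, hball2⟩ := ball_sum hd hB hB'
  obtain ⟨C3, hC3, htail⟩ := tail_sum hd hAB
  set γ : ℝ := A + B - (d:ℝ) with hγdef
  have hγ : 0 < γ := by rw [hγdef]; linarith
  have h4B : (0:ℝ) < (4:ℝ) ^ B := Real.rpow_pos_of_pos (by norm_num) _
  have h2A : (0:ℝ) < (2:ℝ) ^ A := Real.rpow_pos_of_pos (by norm_num) _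
  have h2B : (0:ℝ) < (2:ℝ) ^ B := Real.rpow_pos_of_pos (by norm_num) _
  have h2γ : (0:ℝ) < (2:ℝ) ^ γ := Real.rpow_pos_of_pos (by norm_num) _
  refine ⟨2 ^ A * 2 ^ B * ((C1 + C2 + 4 ^ B * C3) * 2 ^ γ) * 2, by positivity, ?_⟩
  intro a b s
  set R : ℝ := znorm (a - b) with hRdef
  have hR : 0 ≤ R := znorm_nonneg _
  -- smooth core bound
  have core : ∑ y ∈ s, (1 + znorm (a - y)) ^ (-A) * (1 + znorm (y - b)) ^ (-B)
      ≤ (C1 + C2 + 4 ^ B * C3) * 2 ^ γ * (1 + R) ^ (-γ) := by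
    set g : (Fin d → ℤ) → ℝ := fun y => (1 + znorm (a - y)) ^ (-A) * (1 + znorm (y - b)) ^ (-B)
      with hgdef
    have hgnn : ∀ y, 0 ≤ g y := fun y =>
      mul_nonneg (term_nonneg A _) (term_nonneg B _)
    have hhalf : (0:ℝ) < (1 + R / 2) := by linarith
    have htri : ∀ y : Fin d → ℤ, R ≤ znorm (a - y) + znorm (y - b) := fun y =>
      znorm_triangle a y b
    set P1 : (Fin d → ℤ) → Prop := fun y => znorm (a - y) ≤ R / 2 with hP1
    set P2 : (Fin d → ℤ) → Prop := fun y => znorm (y - b) ≤ R / 2 with hP2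
    have hsplit1 := Finset.sum_filter_add_sum_filter_not s P1 g
    have hsplit2 := Finset.sum_filter_add_sum_filter_not (s.filter (fun y => ¬ P1 y)) P2 g
    -- region 1
    have hreg1 : ∑ y ∈ s.filter P1, g y ≤ C1 * 2 ^ γ * (1 + R) ^ (-γ) := by
      have hterm : ∀ y ∈ s.filter P1, g y ≤ (1 + R / 2) ^ (-B) * (1 + znorm (a - y)) ^ (-A) := by
        intro y hy
        have hy1 : znorm (a - y) ≤ R / 2 := (Finset.mem_filter.mp hy).2
        have hy2 : R / 2 ≤ znorm (y - b) := by have := htri y; linarith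
        rw [hgdef]
        simp only
        rw [mul_comm]
        apply mul_le_mul_of_nonneg_right _ (term_nonneg A _)
        exact rpow_anti hhalf (by linarith) hB.le
      have himage : ∑ y ∈ s.filter P1, (1 + znorm (a - y)) ^ (-A)
          ≤ C1 * (1 + R / 2) ^ ((d:ℝ) - A) := by
        have hinj : ∀ y ∈ s.filter P1, ∀ y' ∈ s.filter P1, a - y = a - y' → y = y' :=
          fun y _ y' _ h => by
            have := congrArg (fun v => a - v) (h : a - y = a - y')
            simpa using h
        rw [← Finset.sum_image (f := fun u => (1 + znorm u) ^ (-A)) (g := fun y => a - y) hinj]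
        apply hball1 (R / 2) (by linarith)
        intro u hu
        obtain ⟨y, hy, rfl⟩ := Finset.mem_image.mp hu
        exact (Finset.mem_filter.mp hy).2
      calc ∑ y ∈ s.filter P1, g y
          ≤ ∑ y ∈ s.filter P1, (1 + R / 2) ^ (-B) * (1 + znorm (a - y)) ^ (-A) :=
            Finset.sum_le_sum hterm
        _ = (1 + R / 2) ^ (-B) * ∑ y ∈ s.filter P1, (1 + znorm (a - y)) ^ (-A) := by
            rw [Finset.mul_sum]
        _ ≤ (1 + R / 2) ^ (-B) * (C1 * (1 + R / 2) ^ ((d:ℝ) - A)) := by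
            apply mul_le_mul_of_nonneg_left himage (Real.rpow_nonneg (by linarith) _)
        _ = C1 * (1 + R / 2) ^ (-γ) := by
            rw [mul_comm, mul_assoc, ← Real.rpow_add hhalf]
            congr 2
            rw [hγdef]; ring
        _ ≤ C1 * (2 ^ γ * (1 + R) ^ (-γ)) :=
            mul_le_mul_of_nonneg_left (half_pow_bound hγ.le hR) hC1.le
        _ = C1 * 2 ^ γ * (1 + R) ^ (-γ) := by ring
    -- region 2
    have hreg2 : ∑ y ∈ (s.filter (fun y => ¬ P1 y)).filter P2, g y
        ≤ C2 * 2 ^ γ * (1 + R) ^ (-γ) := by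
      set t := (s.filter (fun y => ¬ P1 y)).filter P2 with htdef
      have hterm : ∀ y ∈ t, g y ≤ (1 + R / 2) ^ (-A) * (1 + znorm (y - b)) ^ (-B) := by
        intro y hy
        rw [htdef, Finset.mem_filter] at hy
        have hy1 : ¬ P1 y := (Finset.mem_filter.mp hy.1).2
        have hy2 : R / 2 ≤ znorm (a - y) := by
          exact (not_le.mp hy1).le
        rw [hgdef]
        simp only
        apply mul_le_mul_of_nonneg_right _ (term_nonneg B _)
        exact rpow_anti hhalf (by linarith) hA.le
      have himage : ∑ y ∈ t, (1 + znorm (y - b)) ^ (-B)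
          ≤ C2 * (1 + R / 2) ^ ((d:ℝ) - B) := by
        have hinj : ∀ y ∈ t, ∀ y' ∈ t, y - b = y' - b → y = y' :=
          fun y _ y' _ h => by
            have := congrArg (fun v => v + b) h
            simpa using this
        rw [← Finset.sum_image (f := fun u => (1 + znorm u) ^ (-B)) (g := fun y => y - b) hinj]
        apply hball2 (R / 2) (by linarith)
        intro u hu
        obtain ⟨y, hy, rfl⟩ := Finset.mem_image.mp hu
        rw [htdef, Finset.mem_filter] at hy
        exact hy.2
      calc ∑ y ∈ t, g y
          ≤ ∑ y ∈ t, (1 + R / 2) ^ (-A) * (1 + znorm (y - b)) ^ (-B) :=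
            Finset.sum_le_sum hterm
        _ = (1 + R / 2) ^ (-A) * ∑ y ∈ t, (1 + znorm (y - b)) ^ (-B) := by
            rw [Finset.mul_sum]
        _ ≤ (1 + R / 2) ^ (-A) * (C2 * (1 + R / 2) ^ ((d:ℝ) - B)) := by
            apply mul_le_mul_of_nonneg_left himage (Real.rpow_nonneg (by linarith) _)
        _ = C2 * (1 + R / 2) ^ (-γ) := by
            rw [mul_comm, mul_assoc, ← Real.rpow_add hhalf]
            congr 2
            rw [hγdef]; ring
        _ ≤ C2 * (2 ^ γ * (1 + R) ^ (-γ)) :=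
            mul_le_mul_of_nonneg_left (half_pow_bound hγ.le hR) hC2.le
        _ = C2 * 2 ^ γ * (1 + R) ^ (-γ) := by ring
    -- region 3
    have hreg3 : ∑ y ∈ (s.filter (fun y => ¬ P1 y)).filter (fun y => ¬ P2 y), g y
        ≤ 4 ^ B * C3 * 2 ^ γ * (1 + R) ^ (-γ) := by
      set t := (s.filter (fun y => ¬ P1 y)).filter (fun y => ¬ P2 y) with htdef
      have hmem : ∀ y ∈ t, R / 2 < znorm (a - y) ∧ R / 2 < znorm (y - b) := by
        intro y hy
        rw [htdef, Finset.mem_filter] at hy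
        have h1 := (Finset.mem_filter.mp hy.1).2
        have h2 := hy.2
        exact ⟨not_le.mp h1, not_le.mp h2⟩
      have hterm : ∀ y ∈ t, g y ≤ 4 ^ B * (1 + znorm (a - y)) ^ (-(A + B)) := by
        intro y hy
        obtain ⟨h1, h2⟩ := hmem y hy
        set s0 := znorm (a - y) with hs0
        set t0 := znorm (y - b) with ht0
        have hs0nn : 0 ≤ s0 := znorm_nonneg _
        have ht0nn : 0 ≤ t0 := znorm_nonneg _
        have hquarter : s0 / 4 ≤ t0 := by
          rcases le_or_gt s0 (2 * R) with hc | hc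
          · linarith
          · have htri2 : s0 ≤ R + t0 := by
              have := znorm_triangle a b y
              rw [← hRdef, znorm_sub_rev b y, ← hs0, ← ht0] at this
              exact this
            linarith
        have hbb : (1 + t0) ^ (-B) ≤ 4 ^ B * (1 + s0) ^ (-B) := by
          have hband : (1 + s0) ^ B ≤ 4 ^ B * (1 + t0) ^ B := by
            calc (1 + s0) ^ B ≤ (4 * (1 + t0)) ^ B :=
                  Real.rpow_le_rpow (by linarith) (by linarith) hB.le
              _ = 4 ^ B * (1 + t0) ^ B := Real.mul_rpow (by norm_num) (by linarith)
          rw [Real.rpow_neg (by linarith : (0:ℝ) ≤ 1 + t0),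
            Real.rpow_neg (by linarith : (0:ℝ) ≤ 1 + s0)]
          exact inv_le_scale (Real.rpow_pos_of_pos (by linarith) _)
            (Real.rpow_pos_of_pos (by linarith) _) h4B hband
        rw [hgdef]
        simp only [← hs0, ← ht0]
        calc (1 + s0) ^ (-A) * (1 + t0) ^ (-B)
            ≤ (1 + s0) ^ (-A) * (4 ^ B * (1 + s0) ^ (-B)) :=
              mul_le_mul_of_nonneg_left hbb (term_nonneg A _)
          _ = 4 ^ B * ((1 + s0) ^ (-A) * (1 + s0) ^ (-B)) := by ring
          _ = 4 ^ B * (1 + s0) ^ (-(A + B)) := by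
              rw [← Real.rpow_add (by linarith : (0:ℝ) < 1 + s0)]
              congr 2
              ring
      have himage : ∑ y ∈ t, (1 + znorm (a - y)) ^ (-(A + B))
          ≤ C3 * (1 + R / 2) ^ ((d:ℝ) - (A + B)) := by
        have hinj : ∀ y ∈ t, ∀ y' ∈ t, a - y = a - y' → y = y' :=
          fun y _ y' _ h => by simpa using h
        rw [← Finset.sum_image (f := fun u => (1 + znorm u) ^ (-(A + B))) (g := fun y => a - y) hinj]
        apply htail (R / 2) (by linarith)
        intro u hu
        obtain ⟨y, hy, rfl⟩ := Finset.mem_image.mp hu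
        exact (hmem y hy).1.le
      calc ∑ y ∈ t, g y ≤ ∑ y ∈ t, 4 ^ B * (1 + znorm (a - y)) ^ (-(A + B)) :=
            Finset.sum_le_sum hterm
        _ = 4 ^ B * ∑ y ∈ t, (1 + znorm (a - y)) ^ (-(A + B)) := by rw [Finset.mul_sum]
        _ ≤ 4 ^ B * (C3 * (1 + R / 2) ^ ((d:ℝ) - (A + B))) :=
            mul_le_mul_of_nonneg_left himage h4B.le
        _ = 4 ^ B * C3 * (1 + R / 2) ^ (-γ) := by
            rw [hγdef]
            have : (d:ℝ) - (A + B) = -(A + B - (d:ℝ)) := by ring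
            rw [this]; ring
        _ ≤ 4 ^ B * C3 * (2 ^ γ * (1 + R) ^ (-γ)) :=
            mul_le_mul_of_nonneg_left (half_pow_bound hγ.le hR) (by positivity)
        _ = 4 ^ B * C3 * 2 ^ γ * (1 + R) ^ (-γ) := by ring
    have hRpow : (0:ℝ) ≤ (1 + R) ^ (-γ) := Real.rpow_nonneg (by linarith) _
    calc ∑ y ∈ s, g y = ∑ y ∈ s.filter P1, g y + (∑ y ∈ (s.filter (fun y => ¬ P1 y)).filter P2, g y
          + ∑ y ∈ (s.filter (fun y => ¬ P1 y)).filter (fun y => ¬ P2 y), g y) := by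
          rw [hsplit2, hsplit1]
      _ ≤ C1 * 2 ^ γ * (1 + R) ^ (-γ) + (C2 * 2 ^ γ * (1 + R) ^ (-γ)
          + 4 ^ B * C3 * 2 ^ γ * (1 + R) ^ (-γ)) :=
          add_le_add hreg1 (add_le_add hreg2 hreg3)
      _ = (C1 + C2 + 4 ^ B * C3) * 2 ^ γ * (1 + R) ^ (-γ) := by ring
  -- from rough weights to smooth weights and back
  have hterm2 : ∀ y : Fin d → ℤ,
      (1 + znorm (a - y) ^ A)⁻¹ * (1 + znorm (y - b) ^ B)⁻¹
        ≤ 2 ^ A * 2 ^ B * ((1 + znorm (a - y)) ^ (-A) * (1 + znorm (y - b)) ^ (-B)) := by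
    intro y
    have h1 := inv_one_add_rpow hA.le (znorm_nonneg (a - y))
    have h2 := inv_one_add_rpow hB.le (znorm_nonneg (y - b))
    have hn2 : (0:ℝ) ≤ 2 ^ A * (1 + znorm (a - y)) ^ (-A) :=
      mul_nonneg h2A.le (term_nonneg A _)
    have hn3 : (0:ℝ) ≤ (1 + znorm (y - b) ^ B)⁻¹ := by
      have := Real.rpow_nonneg (znorm_nonneg (y - b)) B
      have hpos : (0:ℝ) < 1 + znorm (y - b) ^ B := by linarith
      exact (inv_nonneg).mpr hpos.le
    calc (1 + znorm (a - y) ^ A)⁻¹ * (1 + znorm (y - b) ^ B)⁻¹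
        ≤ (2 ^ A * (1 + znorm (a - y)) ^ (-A)) * (2 ^ B * (1 + znorm (y - b)) ^ (-B)) :=
          mul_le_mul h1 h2 hn3 hn2
      _ = 2 ^ A * 2 ^ B * ((1 + znorm (a - y)) ^ (-A) * (1 + znorm (y - b)) ^ (-B)) := by ring
  have hfinal : (1 + R) ^ (-γ) ≤ 2 * (1 + R ^ γ)⁻¹ := by
    have h1 : (0:ℝ) < (1 + R) ^ γ := Real.rpow_pos_of_pos (by linarith) _
    have h2 : (0:ℝ) < 1 + R ^ γ := by
      have := Real.rpow_nonneg hR γ; linarith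
    rw [Real.rpow_neg (by linarith : (0:ℝ) ≤ 1 + R)]
    exact inv_le_scale h1 h2 (by norm_num) (one_add_rpow_ge hγ.le hR)
  calc ∑ y ∈ s, (1 + znorm (a - y) ^ A)⁻¹ * (1 + znorm (y - b) ^ B)⁻¹
      ≤ ∑ y ∈ s, 2 ^ A * 2 ^ B * ((1 + znorm (a - y)) ^ (-A) * (1 + znorm (y - b)) ^ (-B)) :=
        Finset.sum_le_sum (fun y _ => hterm2 y)
    _ = 2 ^ A * 2 ^ B * ∑ y ∈ s, (1 + znorm (a - y)) ^ (-A) * (1 + znorm (y - b)) ^ (-B) := by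
        rw [Finset.mul_sum]
    _ ≤ 2 ^ A * 2 ^ B * ((C1 + C2 + 4 ^ B * C3) * 2 ^ γ * (1 + R) ^ (-γ)) := by
        apply mul_le_mul_of_nonneg_left core (by positivity)
    _ ≤ 2 ^ A * 2 ^ B * ((C1 + C2 + 4 ^ B * C3) * 2 ^ γ * (2 * (1 + R ^ γ)⁻¹)) := by
        apply mul_le_mul_of_nonneg_left _ (by positivity)
        apply mul_le_mul_of_nonneg_left hfinal (by positivity)
    _ = 2 ^ A * 2 ^ B * ((C1 + C2 + 4 ^ B * C3) * 2 ^ γ) * 2 * (1 + R ^ γ)⁻¹ := by ring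

lemma conv_tsum (hd : 0 < d) {A B : ℝ} (hA : 0 < A) (hA' : A < d) (hB : 0 < B)
    (hB' : B < d) (hAB : (d:ℝ) < A + B) :
    ∃ C : ℝ, 0 < C ∧ ∀ a b : Fin d → ℤ,
      ∑' y : Fin d → ℤ, (1 + znorm (a - y) ^ A)⁻¹ * (1 + znorm (y - b) ^ B)⁻¹
        ≤ C * (1 + znorm (a - b) ^ (A + B - (d:ℝ)))⁻¹ := by
  obtain ⟨C, hC, h⟩ := conv_sum hd hA hA' hB hB' hAB
  refine ⟨C, hC, fun a b => ?_⟩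
  apply tsum_le_of_sum_le'
  · have h1 : (0:ℝ) ≤ znorm (a - b) ^ (A + B - (d:ℝ)) := Real.rpow_nonneg (znorm_nonneg _) _
    have h2 : (0:ℝ) < 1 + znorm (a - b) ^ (A + B - (d:ℝ)) := by linarith
    positivity
  · exact fun s => h a b s

end ZN

/-- The merge operation (Lemma 4.8): summing over the label of a degree-2
vertex `pv` adjacent to a leaf `xv` and to `zv` merges the two edges into a
single edge of weight `α(xv,pv)+α(pv,zv)-d`, up to a constant. -/
theorem stmt10 {V : Type*} [Fintype V] [DecidableEq V] {d : ℕ} (hd : 0 < d)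
    (G : SimpleGraph V) [DecidableRel G.Adj] (hG : G.IsTree)
    (E : Finset (V × V)) (hEadj : ∀ e ∈ E, G.Adj e.1 e.2)
    (hEcover : ∀ u v : V, G.Adj u v → (u, v) ∈ E ∨ (v, u) ∈ E)
    (hEcard : E.card = G.edgeFinset.card)
    (xv pv zv : V) (hxz : xv ≠ zv)
    (hdegx : G.degree xv = 1) (hdegp : G.degree pv = 2)
    (hadj1 : G.Adj xv pv) (hadj2 : G.Adj pv zv)
    (hmem1 : (xv, pv) ∈ E) (hmem2 : (pv, zv) ∈ E)
    (α : V × V → ℝ)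
    (h1 : 0 < α (xv, pv)) (h2 : α (xv, pv) < d)
    (h3 : 0 < α (pv, zv)) (h4 : α (pv, zv) < d)
    (h5 : (d : ℝ) < α (xv, pv) + α (pv, zv)) :
    ∃ C : ℝ, 0 < C ∧ ∀ φ : V → (Fin d → ℤ),
      (∑' yy : Fin d → ℤ, edgesWeight E α (Function.update φ pv yy)) ≤
        C * edgesWeight (insert (xv, zv) ((E.erase (xv, pv)).erase (pv, zv)))
              (Function.update α (xv, zv) (α (xv, pv) + α (pv, zv) - d)) φ := by
  classical
  obtain ⟨C, hC, hconv⟩ := ZN.conv_tsum hd h1 h2 h3 h4 h5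
  refine ⟨C, hC, ?_⟩
  intro φ
  have hxp : xv ≠ pv := G.ne_of_adj hadj1
  have hpz : pv ≠ zv := G.ne_of_adj hadj2
  set E'' := (E.erase (xv, pv)).erase (pv, zv) with hE''
  -- injectivity of the Sym2 map on E
  have hinj : Set.InjOn (fun e : V × V => s(e.1, e.2)) ↑E := by
    apply Finset.injOn_of_card_image_eq
    have himg : E.image (fun e : V × V => s(e.1, e.2)) = G.edgeFinset := by
      apply Finset.Subset.antisymm
      · intro m hm
        obtain ⟨e, he, rfl⟩ := Finset.mem_image.mp hm
        rw [SimpleGraph.mem_edgeFinset]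
        exact (hEadj e he)
      · intro m hm
        induction m with
        | _ u v =>
          rw [SimpleGraph.mem_edgeFinset, SimpleGraph.mem_edgeSet] at hm
          rcases hEcover u v hm with h | h
          · exact Finset.mem_image.mpr ⟨(u, v), h, rfl⟩
          · exact Finset.mem_image.mpr ⟨(v, u), h, Sym2.eq_swap⟩
    rw [himg, hEcard]
  -- neighborhood of pv
  have hcard2 : ({xv, zv} : Finset V).card = 2 := by
    rw [Finset.card_insert_of_notMem (by simp [hxz]), Finset.card_singleton]
  have hnp : G.neighborFinset pv = {xv, zv} := by
    symm
    apply Finset.eq_of_subset_of_card_le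
    · intro w hw
      rcases Finset.mem_insert.mp hw with h | h
      · subst h; exact (SimpleGraph.mem_neighborFinset _ _ _).mpr hadj1.symm
      · rw [Finset.mem_singleton] at h; subst h
        exact (SimpleGraph.mem_neighborFinset _ _ _).mpr hadj2
    · rw [SimpleGraph.card_neighborFinset_eq_degree, hdegp, hcard2]
  -- neighborhood of xv
  have hnx : G.neighborFinset xv = {pv} := by
    symm
    apply Finset.eq_of_subset_of_card_le
    · intro w hw
      rw [Finset.mem_singleton] at hw; subst hw
      exact (SimpleGraph.mem_neighborFinset _ _ _).mpr hadj1
    · rw [SimpleGraph.card_neighborFinset_eq_degree, hdegx, Finset.card_singleton]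
  have hnadj : ¬ G.Adj xv zv := by
    intro h
    have : zv ∈ G.neighborFinset xv := (SimpleGraph.mem_neighborFinset _ _ _).mpr h
    rw [hnx, Finset.mem_singleton] at this
    exact hpz this.symm
  have hxzE : (xv, zv) ∉ E := fun h => hnadj (hEadj _ h)
  have hxzE'' : (xv, zv) ∉ E'' := fun h =>
    hxzE (Finset.mem_of_mem_erase (Finset.mem_of_mem_erase h))
  -- edges in E'' avoid pv
  have hnotpv : ∀ e ∈ E'', e.1 ≠ pv ∧ e.2 ≠ pv := by
    intro e he
    have heE : e ∈ E := Finset.mem_of_mem_erase (Finset.mem_of_mem_erase he)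
    have hadj := hEadj e heE
    have hne1 : e ≠ (pv, zv) := Finset.ne_of_mem_erase he
    have hne2 : e ≠ (xv, pv) := Finset.ne_of_mem_erase (Finset.mem_of_mem_erase he)
    constructor
    · intro hh
      have hmemn : e.2 ∈ G.neighborFinset pv :=
        (SimpleGraph.mem_neighborFinset _ _ _).mpr (hh ▸ hadj)
      rw [hnp] at hmemn
      rcases Finset.mem_insert.mp hmemn with h | h
      · have hePair : e = (pv, xv) := Prod.ext hh h
        have hmemE : (pv, xv) ∈ E := hePair ▸ heE
        have heq : (fun e : V × V => s(e.1, e.2)) (pv, xv)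
            = (fun e : V × V => s(e.1, e.2)) (xv, pv) := by
          simp [Sym2.eq_swap]
        have := hinj (Finset.mem_coe.mpr hmemE) (Finset.mem_coe.mpr hmem1) heq
        exact hxp (congrArg Prod.snd this)
      · rw [Finset.mem_singleton] at h
        exact hne1 (Prod.ext hh h)
    · intro hh
      have hmemn : e.1 ∈ G.neighborFinset pv :=
        (SimpleGraph.mem_neighborFinset _ _ _).mpr (hh ▸ hadj).symm
      rw [hnp] at hmemn
      rcases Finset.mem_insert.mp hmemn with h | h
      · exact hne2 (Prod.ext h hh)
      · rw [Finset.mem_singleton] at h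
        have hePair : e = (zv, pv) := Prod.ext h hh
        have hmemE : (zv, pv) ∈ E := hePair ▸ heE
        have heq : (fun e : V × V => s(e.1, e.2)) (zv, pv)
            = (fun e : V × V => s(e.1, e.2)) (pv, zv) := by
          simp [Sym2.eq_swap]
        have := hinj (Finset.mem_coe.mpr hmemE) (Finset.mem_coe.mpr hmem2) heq
        exact hpz (congrArg Prod.fst this).symm
  -- decomposition of E
  have hm2' : (pv, zv) ∈ E.erase (xv, pv) :=
    Finset.mem_erase.mpr ⟨fun h => hxp (congrArg Prod.fst h).symm, hmem2⟩
  have hEdecomp : insert (xv, pv) (insert (pv, zv) E'') = E := by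
    rw [hE'', Finset.insert_erase hm2', Finset.insert_erase hmem1]
  have hxppz : (xv, pv) ∉ insert (pv, zv) E'' := by
    intro h
    rcases Finset.mem_insert.mp h with h | h
    · exact hxp (congrArg Prod.fst h)
    · exact Finset.notMem_erase _ _ (Finset.mem_of_mem_erase h)
  have hpzE'' : (pv, zv) ∉ E'' := Finset.notMem_erase _ _
  set P : ℝ := edgesWeight E'' α φ with hPdef
  have hP : 0 ≤ P := by
    rw [hPdef, edgesWeight]
    apply Finset.prod_nonneg
    intro e _
    have h := Real.rpow_nonneg (ZN.znorm_nonneg (φ e.1 - φ e.2)) (α e)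
    positivity
  -- LHS factorization
  have hLHS : ∀ y : Fin d → ℤ, edgesWeight E α (Function.update φ pv y)
      = ((1 + znorm (φ xv - y) ^ α (xv, pv))⁻¹
          * (1 + znorm (y - φ zv) ^ α (pv, zv))⁻¹) * P := by
    intro y
    rw [edgesWeight, ← hEdecomp, Finset.prod_insert hxppz, Finset.prod_insert hpzE'']
    have e1 : Function.update φ pv y xv = φ xv := Function.update_of_ne hxp _ _
    have e2 : Function.update φ pv y pv = y := Function.update_self _ _ _
    have e3 : Function.update φ pv y zv = φ zv := Function.update_of_ne (Ne.symm hpz) _ _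
    have e4 : ∏ e ∈ E'', 1 / (1 + znorm (Function.update φ pv y e.1
        - Function.update φ pv y e.2) ^ α e) = P := by
      rw [hPdef, edgesWeight]
      apply Finset.prod_congr rfl
      intro e he
      rw [Function.update_of_ne (hnotpv e he).1, Function.update_of_ne (hnotpv e he).2]
    rw [e4]
    simp only [e1, e2, e3, one_div]
    ring
  -- RHS factorization
  have hRHS : edgesWeight (insert (xv, zv) E'')
      (Function.update α (xv, zv) (α (xv, pv) + α (pv, zv) - d)) φ
      = (1 + znorm (φ xv - φ zv) ^ (α (xv, pv) + α (pv, zv) - (d:ℝ)))⁻¹ * P := by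
    rw [edgesWeight, Finset.prod_insert hxzE'']
    have e5 : ∏ e ∈ E'', 1 / (1 + znorm (φ e.1 - φ e.2)
        ^ Function.update α (xv, zv) (α (xv, pv) + α (pv, zv) - d) e) = P := by
      rw [hPdef, edgesWeight]
      apply Finset.prod_congr rfl
      intro e he
      have hne : e ≠ (xv, zv) := fun h => hxzE'' (h ▸ he)
      rw [Function.update_of_ne hne]
    rw [e5, Function.update_self, one_div]
  calc ∑' y : Fin d → ℤ, edgesWeight E α (Function.update φ pv y)
      = ∑' y : Fin d → ℤ, ((1 + znorm (φ xv - y) ^ α (xv, pv))⁻¹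
          * (1 + znorm (y - φ zv) ^ α (pv, zv))⁻¹) * P := tsum_congr hLHS
    _ = (∑' y : Fin d → ℤ, (1 + znorm (φ xv - y) ^ α (xv, pv))⁻¹
          * (1 + znorm (y - φ zv) ^ α (pv, zv))⁻¹) * P := tsum_mul_right
    _ ≤ (C * (1 + znorm (φ xv - φ zv) ^ (α (xv, pv) + α (pv, zv) - (d:ℝ)))⁻¹) * P :=
        mul_le_mul_of_nonneg_right (hconv (φ xv) (φ zv)) hP
    _ = C * edgesWeight (insert (xv, zv) E'')
          (Function.update α (xv, zv) (α (xv, pv) + α (pv, zv) - d)) φ := by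
        rw [hRHS]; ring
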